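/- Rigidity theorem: let Ω ⊆ ℝⁿ be a connected open set and let φ, φ₀ : Ω → ℝⁿ be C¹ maps with Dφ₀(x) invertible for all x, such that Dφ(x)·(Dφ(x))ᵀ = Dφ₀(x)·(Dφ₀(x))ᵀ for all x ∈ Ω. Then there exist c ∈ ℝⁿ and Q ∈ O(n) ... in fact if det Dφ and det Dφ₀ have the same sign, Q ∈ SO(n), such that φ = c + Q ∘ φ₀ on Ω. -/

import Mathlib

open Metric Set Matrix


/-- Partial derivative ∂_i of a scalar field on ℝⁿ. -/
noncomputable def pd {n : ℕ} (i : Fin n) (f : (Fin n → ℝ) → ℝ) (x : Fin n → ℝ) : ℝ :=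
  fderiv ℝ f x (Pi.single i 1)

/-- Jacobian matrix (Dφ)_{ij} = ∂_i φ_j. -/
noncomputable def jac {n : ℕ} (φ : (Fin n → ℝ) → (Fin n → ℝ)) (x : Fin n → ℝ) :
    Matrix (Fin n) (Fin n) ℝ :=
  fun i j => pd i (fun z => φ z j) x


section PiWorld
variable {n : ℕ}

lemma fderiv_coord {φ : (Fin n → ℝ) → (Fin n → ℝ)} {x : Fin n → ℝ}
    (h : DifferentiableAt ℝ φ x) (j : Fin n) :
    fderiv ℝ (fun z => φ z j) x = (ContinuousLinearMap.proj j).comp (fderiv ℝ φ x) := by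
  have := ((ContinuousLinearMap.proj (R := ℝ) (φ := fun _ : Fin n => ℝ) j).hasFDerivAt
      (x := φ x)).comp x h.hasFDerivAt
  exact this.fderiv

lemma toMatrix'_fderiv {φ : (Fin n → ℝ) → (Fin n → ℝ)} {x : Fin n → ℝ}
    (h : DifferentiableAt ℝ φ x) :
    LinearMap.toMatrix' (↑(fderiv ℝ φ x) : (Fin n → ℝ) →ₗ[ℝ] (Fin n → ℝ)) = (jac φ x)ᵀ := by
  ext i j
  rw [LinearMap.toMatrix'_apply]
  have hsingle : (fun j' : Fin n => if j' = j then (1:ℝ) else 0) = Pi.single j 1 := by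
    ext j'; rw [Pi.single_apply]
  rw [Matrix.transpose_apply]
  show fderiv ℝ φ x (Pi.single j 1) i = jac φ x j i
  have : jac φ x j i = fderiv ℝ (fun z => φ z i) x (Pi.single j 1) := rfl
  rw [this, fderiv_coord h i]
  rfl

lemma fderiv_eq_mulVec {φ : (Fin n → ℝ) → (Fin n → ℝ)} {x : Fin n → ℝ}
    (h : DifferentiableAt ℝ φ x) (w : Fin n → ℝ) :
    fderiv ℝ φ x w = ((jac φ x)ᵀ).mulVec w := by
  have h1 := Matrix.toLin'_toMatrix' (↑(fderiv ℝ φ x) : (Fin n → ℝ) →ₗ[ℝ] (Fin n → ℝ))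
  rw [toMatrix'_fderiv h] at h1
  have := congrFun (congrArg (fun (L : (Fin n → ℝ) →ₗ[ℝ] (Fin n → ℝ)) => (L : _ → _)) h1) w
  rw [Matrix.toLin'_apply] at this
  exact this.symm

lemma dot_mulVec_eq (M : Matrix (Fin n) (Fin n) ℝ) (u v : Fin n → ℝ) :
    dotProduct (M.mulVec u) (M.mulVec v) = dotProduct u ((Mᵀ * M).mulVec v) := by
  rw [← Matrix.mulVec_mulVec, Matrix.dotProduct_mulVec u, Matrix.vecMul_transpose]

end PiWorld


lemma eq_on_of_locally_const {X β : Type*} [TopologicalSpace X] {s : Set X}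
    (hs : IsPreconnected s) {f : X → β} (h : ∀ x ∈ s, ∀ᶠ y in nhds x, f y = f x)
    {x₀ : X} (hx₀ : x₀ ∈ s) : ∀ x ∈ s, f x = f x₀ := by
  by_contra hcon
  push_neg at hcon
  obtain ⟨x₁, hx₁s, hx₁⟩ := hcon
  set U := {x : X | ∀ᶠ y in nhds x, f y = f x₀} with hU
  set V := {x : X | ∀ᶠ y in nhds x, f y ≠ f x₀} with hV
  have hUo : IsOpen U := isOpen_setOf_eventually_nhds
  have hVo : IsOpen V := isOpen_setOf_eventually_nhds
  have hcover : s ⊆ U ∪ V := by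
    intro x hx
    by_cases hfx : f x = f x₀
    · left; exact (h x hx).mono (fun y hy => hy.trans hfx)
    · right; exact (h x hx).mono (fun y hy => hy ▸ hfx)
  have hne1 : (s ∩ U).Nonempty := ⟨x₀, hx₀, h x₀ hx₀⟩
  have hne2 : (s ∩ V).Nonempty := ⟨x₁, hx₁s, (h x₁ hx₁s).mono (fun y hy => hy ▸ hx₁)⟩
  obtain ⟨x, -, hxU, hxV⟩ := hs U V hUo hVo hcover hne1 hne2
  obtain ⟨y, hy1, hy2⟩ := (hxU.and hxV).exists
  exact hy2 hy1

section EWorld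

variable {F : Type*} [NormedAddCommGroup F] [InnerProductSpace ℝ F] [FiniteDimensional ℝ F]

local notation "⟪" x ", " y "⟫" => @inner ℝ _ _ x y

/-- Two continuous linear maps agreeing on a ball around 0 are equal. -/
lemma clm_ext_ball {L₁ L₂ : F →L[ℝ] F} {r : ℝ} (hr : 0 < r)
    (h : ∀ v : F, ‖v‖ < r → L₁ v = L₂ v) : L₁ = L₂ := by
  ext v
  have hc : (0:ℝ) < r / (2 * (‖v‖ + 1)) := by positivity
  set c := r / (2 * (‖v‖ + 1)) with hcdef
  have hnorm : ‖c • v‖ < r := by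
    rw [norm_smul, Real.norm_eq_abs, abs_of_pos hc]
    have h1 : 0 ≤ ‖v‖ := norm_nonneg v
    rw [hcdef]
    rw [div_mul_eq_mul_div, div_lt_iff₀ (by positivity)]
    nlinarith
  have := h (c • v) hnorm
  rw [_root_.map_smul, _root_.map_smul] at this
  exact smul_right_injective F (ne_of_gt hc) this

lemma exists_equiv' (L : F →L[ℝ] F) (h : Function.Bijective L) :
    ∃ e : F ≃L[ℝ] F, (e : F →L[ℝ] F) = L := by
  refine ⟨ContinuousLinearEquiv.ofBijective L (LinearMap.ker_eq_bot.mpr h.1)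
      (LinearMap.range_eq_top.mpr h.2), ?_⟩
  ext v; rfl

lemma bijective_of_isometric (L : F →L[ℝ] F) (h : ∀ v, ‖L v‖ = ‖v‖) :
    Function.Bijective L := by
  have hinj : Function.Injective L := by
    intro a b hab
    have : ‖a - b‖ = 0 := by rw [← h, map_sub, hab, sub_self, norm_zero]
    exact sub_eq_zero.mp (norm_eq_zero.mp this)
  exact ⟨hinj, (LinearMap.injective_iff_surjective (f := (L : F →ₗ[ℝ] F))).mp hinj⟩

lemma exists_equiv (L : F →L[ℝ] F) (h : ∀ v, ‖L v‖ = ‖v‖) :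
    ∃ e : F ≃L[ℝ] F, (e : F →L[ℝ] F) = L :=
  exists_equiv' L (bijective_of_isometric L h)


lemma fderiv_fixed_of_isometryOn {ψ : F → F} {z₀ : F} {ρ : ℝ} (hρ : 0 < ρ)
    (hdiff : ∀ z ∈ Metric.ball z₀ ρ, DifferentiableAt ℝ ψ z)
    (hiso : ∀ a ∈ Metric.ball z₀ ρ, ∀ b ∈ Metric.ball z₀ ρ, ‖ψ a - ψ b‖ = ‖a - b‖) :
    ∀ z ∈ Metric.ball z₀ ρ, ∀ w : F, ‖w‖ < ρ - dist z z₀ →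
      fderiv ℝ ψ z w = ψ (z₀ + w) - ψ z₀ := by
  set g : F → F := fun v => ψ (z₀ + v) - ψ z₀ with hgdef
  have hmem : ∀ v : F, ‖v‖ < ρ → z₀ + v ∈ Metric.ball z₀ ρ := by
    intro v hv
    rw [Metric.mem_ball, dist_eq_norm]
    simpa using hv
  have hg_norm : ∀ u v : F, ‖u‖ < ρ → ‖v‖ < ρ → ‖g u - g v‖ = ‖u - v‖ := by
    intro u v hu hv
    have := hiso _ (hmem u hu) _ (hmem v hv)
    simpa [hgdef, sub_sub_sub_cancel_right, add_sub_add_left_eq_sub] using this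
  have hg0 : g 0 = 0 := by simp [hgdef]
  have hg_nrm : ∀ v : F, ‖v‖ < ρ → ‖g v‖ = ‖v‖ := by
    intro v hv
    have := hg_norm v 0 hv (by simpa using hρ)
    simpa [hg0] using this
  have hg_inner : ∀ u v : F, ‖u‖ < ρ → ‖v‖ < ρ → ⟪g u, g v⟫ = ⟪u, v⟫ := by
    intro u v hu hv
    have h0 : ‖g u - g v‖ ^ 2 = ‖u - v‖ ^ 2 := by rw [hg_norm u v hu hv]
    have e1 := norm_sub_sq_real (g u) (g v)
    have e2 := norm_sub_sq_real u v
    have n1 : ‖g u‖ ^ 2 = ‖u‖ ^ 2 := by rw [hg_nrm u hu]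
    have n2 : ‖g v‖ ^ 2 = ‖v‖ ^ 2 := by rw [hg_nrm v hv]
    linarith
  have hg_add : ∀ u v : F, ‖u‖ < ρ → ‖v‖ < ρ → ‖u + v‖ < ρ → g (u + v) = g u + g v := by
    intro u v hu hv huv
    have key : ‖g (u + v) - (g u + g v)‖ ^ 2 = 0 := by
      have e1 := norm_sub_sq_real (g (u + v)) (g u + g v)
      have e2 : ⟪g (u + v), g u + g v⟫ = ⟪u + v, u⟫ + ⟪u + v, v⟫ := by
        rw [inner_add_right, hg_inner _ _ huv hu, hg_inner _ _ huv hv]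
      have e3 : ⟪u + v, u⟫ + ⟪u + v, v⟫ = ‖u + v‖ ^ 2 := by
        rw [← inner_add_right, real_inner_self_eq_norm_sq]
      have e4 := norm_add_sq_real (g u) (g v)
      have e5 : ⟪g u, g v⟫ = ⟪u, v⟫ := hg_inner _ _ hu hv
      have e6 := norm_add_sq_real u v
      have n1 : ‖g (u + v)‖ ^ 2 = ‖u + v‖ ^ 2 := by rw [hg_nrm _ huv]
      have n2 : ‖g u‖ ^ 2 = ‖u‖ ^ 2 := by rw [hg_nrm _ hu]
      have n3 : ‖g v‖ ^ 2 = ‖v‖ ^ 2 := by rw [hg_nrm _ hv]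
      linarith
    have := norm_eq_zero.mp (pow_eq_zero_iff two_ne_zero |>.mp key)
    exact sub_eq_zero.mp this
  have hg_smul : ∀ (t : ℝ) (v : F), ‖v‖ < ρ → ‖t • v‖ < ρ → g (t • v) = t • g v := by
    intro t v hv htv
    have key : ‖g (t • v) - t • g v‖ ^ 2 = 0 := by
      have e1 := norm_sub_sq_real (g (t • v)) (t • g v)
      have e2 : ⟪g (t • v), t • g v⟫ = t * (t * ‖v‖ ^ 2) := by
        rw [real_inner_smul_right, hg_inner _ _ htv hv, real_inner_smul_left,
          real_inner_self_eq_norm_sq]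
      have n1 : ‖g (t • v)‖ ^ 2 = t ^ 2 * ‖v‖ ^ 2 := by
        rw [hg_nrm _ htv, norm_smul, Real.norm_eq_abs, mul_pow, sq_abs]
      have n2 : ‖t • g v‖ ^ 2 = t ^ 2 * ‖v‖ ^ 2 := by
        rw [norm_smul, Real.norm_eq_abs, mul_pow, sq_abs, hg_nrm _ hv]
      linarith
    have := norm_eq_zero.mp (pow_eq_zero_iff two_ne_zero |>.mp key)
    exact sub_eq_zero.mp this
  intro z hz w hw
  have hz' : dist z z₀ < ρ := Metric.mem_ball.mp hz
  set v₀ : F := z - z₀ with hv₀def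
  have hv₀ : ‖v₀‖ < ρ := by rw [hv₀def, ← dist_eq_norm]; exact hz'
  have hwρ : ‖w‖ < ρ := lt_of_lt_of_le hw (by linarith [dist_nonneg (x := z) (y := z₀)])
  have hev : ∀ᶠ t : ℝ in nhds (0:ℝ), ψ (z + t • w) = ψ z + t • g w := by
    have hball : Metric.ball (0:ℝ) 1 ∈ nhds (0:ℝ) := Metric.ball_mem_nhds 0 one_pos
    filter_upwards [hball] with t ht
    rw [Metric.mem_ball, dist_zero_right, Real.norm_eq_abs] at ht
    have htw : ‖t • w‖ < ρ - dist z z₀ := by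
      rw [norm_smul, Real.norm_eq_abs]
      calc |t| * ‖w‖ ≤ 1 * ‖w‖ := by
            apply mul_le_mul_of_nonneg_right (le_of_lt ht) (norm_nonneg w)
        _ < ρ - dist z z₀ := by rwa [one_mul]
    have htwρ : ‖t • w‖ < ρ := lt_of_lt_of_le htw (by linarith [dist_nonneg (x := z) (y := z₀)])
    have hsum : ‖v₀ + t • w‖ < ρ := by
      calc ‖v₀ + t • w‖ ≤ ‖v₀‖ + ‖t • w‖ := norm_add_le _ _
        _ < dist z z₀ + (ρ - dist z z₀) := by
            rw [hv₀def, ← dist_eq_norm]; exact add_lt_add_of_le_of_lt le_rfl htw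
        _ = ρ := by ring
    have e1 : z + t • w = z₀ + (v₀ + t • w) := by rw [hv₀def]; abel
    have e2 : ψ (z + t • w) = g (v₀ + t • w) + ψ z₀ := by rw [e1, hgdef]; simp
    have e3 : g (v₀ + t • w) = g v₀ + g (t • w) := hg_add _ _ hv₀ htwρ hsum
    have e4 : g (t • w) = t • g w := hg_smul t w hwρ htwρ
    have e5 : ψ z = g v₀ + ψ z₀ := by
      rw [hgdef]; simp [hv₀def]
    rw [e2, e3, e4, e5]; abel
  have h1 : HasDerivAt (fun t : ℝ => ψ z + t • g w) (g w) 0 := by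
    have := ((hasDerivAt_id (0:ℝ)).smul_const (g w)).const_add (ψ z)
    simpa using this
  have h2 : HasDerivAt (fun t : ℝ => ψ (z + t • w)) (g w) 0 :=
    h1.congr_of_eventuallyEq hev
  have hline : HasDerivAt (fun t : ℝ => z + t • w) w 0 := by
    have := ((hasDerivAt_id (0:ℝ)).smul_const w).const_add z
    simpa using this
  have h3 : HasDerivAt (fun t : ℝ => ψ (z + t • w)) (fderiv ℝ ψ z w) 0 := by
    have hψd : HasFDerivAt ψ (fderiv ℝ ψ z) (z + (0:ℝ) • w) := by
      simpa using (hdiff z hz).hasFDerivAt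
    exact hψd.comp_hasDerivAt (0:ℝ) hline
  exact h3.unique h2

lemma key_local {W : Set F} (hW : IsOpen W) {ψ : F → F}
    (hψ : ∀ z ∈ W, ContDiffAt ℝ 1 ψ z)
    (hiso : ∀ z ∈ W, ∀ v : F, ‖fderiv ℝ ψ z v‖ = ‖v‖) :
    ∀ z₀ ∈ W, ∀ᶠ z in nhds z₀, fderiv ℝ ψ z = fderiv ℝ ψ z₀ := by
  intro z₀ hz₀
  have hdiffW : ∀ z ∈ W, DifferentiableAt ℝ ψ z := fun z hz =>
    (hψ z hz).differentiableAt one_ne_zero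
  have hop : ∀ z ∈ W, ‖fderiv ℝ ψ z‖ ≤ 1 := fun z hz =>
    ContinuousLinearMap.opNorm_le_bound _ zero_le_one (fun v => by rw [hiso z hz v, one_mul])
  -- local inverse of ψ at z₀
  obtain ⟨eq₀, heq₀⟩ := exists_equiv (fderiv ℝ ψ z₀) (hiso z₀ hz₀)
  have hs : HasStrictFDerivAt ψ (eq₀ : F →L[ℝ] F) z₀ :=
    (hψ z₀ hz₀).hasStrictFDerivAt' (heq₀ ▸ (hdiffW z₀ hz₀).hasFDerivAt) one_ne_zero
  set P := hs.toOpenPartialHomeomorph ψ with hPdef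
  have hPc : ⇑P = ψ := hs.toOpenPartialHomeomorph_coe
  have hz₀s : z₀ ∈ P.source := hs.mem_toOpenPartialHomeomorph_source
  -- δ₁-ball inside W ∩ P.source
  obtain ⟨δ₁, hδ₁pos, hδ₁⟩ := Metric.isOpen_iff.mp (hW.inter P.open_source) z₀ ⟨hz₀, hz₀s⟩
  -- ψ is 1-Lipschitz on ball z₀ δ₁
  have hlip : ∀ a ∈ Metric.ball z₀ δ₁, ∀ b ∈ Metric.ball z₀ δ₁, ‖ψ a - ψ b‖ ≤ ‖a - b‖ := by
    intro a ha b hb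
    have := (convex_ball z₀ δ₁).norm_image_sub_le_of_norm_hasFDerivWithin_le
      (f := ψ) (f' := fun z => fderiv ℝ ψ z) (C := 1)
      (fun z hz => ((hdiffW z (hδ₁ hz).1).hasFDerivAt).hasFDerivWithinAt)
      (fun z hz => hop z (hδ₁ hz).1) hb ha
    simpa using this
  have hψz₀T : ψ z₀ ∈ P.target := by
    have := P.map_source hz₀s
    rwa [show P z₀ = ψ z₀ from congrFun hPc z₀] at this
  have hsymm₀ : P.symm (ψ z₀) = z₀ := by
    have := P.left_inv hz₀s
    rwa [show P z₀ = ψ z₀ from congrFun hPc z₀] at this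
  -- find r with ball (ψ z₀) r ⊆ target and symm-image in ball z₀ δ₁
  have hcsymm : ContinuousAt P.symm (ψ z₀) :=
    P.continuousOn_symm.continuousAt (P.open_target.mem_nhds hψz₀T)
  have hmemnhds : P.target ∩ P.symm ⁻¹' (Metric.ball z₀ δ₁) ∈ nhds (ψ z₀) := by
    refine Filter.inter_mem (P.open_target.mem_nhds hψz₀T) ?_
    have : Metric.ball z₀ δ₁ ∈ nhds (P.symm (ψ z₀)) := by
      rw [hsymm₀]; exact Metric.ball_mem_nhds _ hδ₁pos
    exact hcsymm.preimage_mem_nhds this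
  obtain ⟨r, hrpos, hr⟩ := Metric.mem_nhds_iff.mp hmemnhds
  -- the inverse is 1-Lipschitz on ball (ψ z₀) r
  have hinvlip : ∀ a ∈ Metric.ball (ψ z₀) r, ∀ b ∈ Metric.ball (ψ z₀) r,
      ‖P.symm a - P.symm b‖ ≤ ‖a - b‖ := by
    intro a ha b hb
    have := (convex_ball (ψ z₀) r).norm_image_sub_le_of_norm_hasFDerivWithin_le
      (f := P.symm) (f' := fun y => ContinuousLinearMap.inverse (fderiv ℝ ψ (P.symm y))) (C := 1)
      ?_ ?_ hb ha
    · simpa using this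
    · intro y hy
      have hyT : y ∈ P.target := (hr hy).1
      have hxball : P.symm y ∈ Metric.ball z₀ δ₁ := (hr hy).2
      have hxW : P.symm y ∈ W := (hδ₁ hxball).1
      obtain ⟨e, he⟩ := exists_equiv (fderiv ℝ ψ (P.symm y)) (hiso _ hxW)
      have hd : HasFDerivAt (⇑P) (e : F →L[ℝ] F) (P.symm y) := by
        rw [hPc, he]; exact (hdiffW _ hxW).hasFDerivAt
      have := P.hasFDerivAt_symm hyT hd
      have hinv : ContinuousLinearMap.inverse (fderiv ℝ ψ (P.symm y)) = (e.symm : F →L[ℝ] F) := by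
        rw [← he, ContinuousLinearMap.inverse_equiv]
      beta_reduce
      rw [hinv]
      exact this.hasFDerivWithinAt
    · intro y hy
      have hxW : P.symm y ∈ W := (hδ₁ (hr hy).2).1
      obtain ⟨e, he⟩ := exists_equiv (fderiv ℝ ψ (P.symm y)) (hiso _ hxW)
      have hinv : ContinuousLinearMap.inverse (fderiv ℝ ψ (P.symm y)) = (e.symm : F →L[ℝ] F) := by
        rw [← he, ContinuousLinearMap.inverse_equiv]
      beta_reduce
      rw [hinv]
      refine ContinuousLinearMap.opNorm_le_bound _ zero_le_one (fun v => ?_)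
      have h1 : ‖fderiv ℝ ψ (P.symm y) (e.symm v)‖ = ‖e.symm v‖ := hiso _ hxW _
      have h3 : fderiv ℝ ψ (P.symm y) (e.symm v) = v := by
        rw [← he]; exact e.apply_symm_apply v
      rw [h3] at h1
      have h2 : ‖(e.symm : F →L[ℝ] F) v‖ = ‖v‖ := by simpa using h1.symm
      rw [one_mul, h2]
  set ρ := min δ₁ r with hρdef
  have hρpos : 0 < ρ := lt_min hδ₁pos hrpos
  have hsubδ : Metric.ball z₀ ρ ⊆ Metric.ball z₀ δ₁ := Metric.ball_subset_ball (min_le_left _ _)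
  have hψmaps : ∀ a ∈ Metric.ball z₀ ρ, ψ a ∈ Metric.ball (ψ z₀) r := by
    intro a ha
    rw [Metric.mem_ball, dist_eq_norm]
    calc ‖ψ a - ψ z₀‖ ≤ ‖a - z₀‖ := hlip a (hsubδ ha) z₀ (Metric.mem_ball_self hδ₁pos)
      _ < ρ := by rw [← dist_eq_norm]; exact Metric.mem_ball.mp ha
      _ ≤ r := min_le_right _ _
  have hisoB : ∀ a ∈ Metric.ball z₀ ρ, ∀ b ∈ Metric.ball z₀ ρ, ‖ψ a - ψ b‖ = ‖a - b‖ := by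
    intro a ha b hb
    refine le_antisymm (hlip a (hsubδ ha) b (hsubδ hb)) ?_
    have hsa : P.symm (ψ a) = a := by
      have := P.left_inv (hδ₁ (hsubδ ha)).2
      rwa [show P a = ψ a from congrFun hPc a] at this
    have hsb : P.symm (ψ b) = b := by
      have := P.left_inv (hδ₁ (hsubδ hb)).2
      rwa [show P b = ψ b from congrFun hPc b] at this
    have := hinvlip (ψ a) (hψmaps a ha) (ψ b) (hψmaps b hb)
    rwa [hsa, hsb] at this
  -- now apply the previous lemma
  have hkey := fderiv_fixed_of_isometryOn hρpos
    (fun z hz => hdiffW z (hδ₁ (hsubδ hz)).1) hisoB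
  have hball2 : Metric.ball z₀ (ρ/2) ∈ nhds z₀ := Metric.ball_mem_nhds _ (by linarith)
  filter_upwards [hball2] with z hz
  have hzρ : z ∈ Metric.ball z₀ ρ := Metric.ball_subset_ball (by linarith) hz
  refine clm_ext_ball (r := ρ/2) (by linarith) (fun w hw => ?_)
  have h1 : fderiv ℝ ψ z w = ψ (z₀ + w) - ψ z₀ := by
    refine hkey z hzρ w ?_
    have : dist z z₀ < ρ/2 := Metric.mem_ball.mp hz
    linarith
  have h2 : fderiv ℝ ψ z₀ w = ψ (z₀ + w) - ψ z₀ := by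
    refine hkey z₀ (Metric.mem_ball_self hρpos) w ?_
    simp only [dist_self]
    linarith
  rw [h1, h2]

lemma pair_loc {Ω' : Set F} (hΩo : IsOpen Ω') {Φ Φ₀ : F → F}
    (hΦ : ∀ x ∈ Ω', ContDiffAt ℝ 1 Φ x) (hΦ₀ : ∀ x ∈ Ω', ContDiffAt ℝ 1 Φ₀ x)
    (hbij : ∀ x ∈ Ω', Function.Bijective (fderiv ℝ Φ₀ x))
    (hAB : ∀ x ∈ Ω', ∀ v : F, ‖fderiv ℝ Φ x v‖ = ‖fderiv ℝ Φ₀ x v‖) :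
    ∀ x₀ ∈ Ω', ∃ C : F →L[ℝ] F, ∀ᶠ x in nhds x₀,
      fderiv ℝ Φ x = C.comp (fderiv ℝ Φ₀ x) := by
  intro x₀ hx₀
  have hdΦ : ∀ x ∈ Ω', DifferentiableAt ℝ Φ x := fun x hx => (hΦ x hx).differentiableAt one_ne_zero
  have hdΦ₀ : ∀ x ∈ Ω', DifferentiableAt ℝ Φ₀ x := fun x hx => (hΦ₀ x hx).differentiableAt one_ne_zero
  obtain ⟨B₀e, hB₀e⟩ := exists_equiv' _ (hbij x₀ hx₀)
  have hB₀d : HasFDerivAt Φ₀ (B₀e : F →L[ℝ] F) x₀ := hB₀e ▸ (hdΦ₀ x₀ hx₀).hasFDerivAt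
  set P := (hΦ₀ x₀ hx₀).toOpenPartialHomeomorph Φ₀ hB₀d one_ne_zero with hPdef
  have hPc : ⇑P = Φ₀ := rfl
  have hx₀s : x₀ ∈ P.source := (hΦ₀ x₀ hx₀).mem_toOpenPartialHomeomorph_source hB₀d one_ne_zero
  set W := P.target ∩ P.symm ⁻¹' (Ω' ∩ P.source) with hWdef
  have hWo : IsOpen W :=
    P.continuousOn_symm.isOpen_inter_preimage P.open_target (hΩo.inter P.open_source)
  have hy₀W : Φ₀ x₀ ∈ W := by
    constructor
    · have := P.map_source hx₀s
      rwa [show P x₀ = Φ₀ x₀ from congrFun hPc x₀] at this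
    · have hli : P.symm (Φ₀ x₀) = x₀ := by
        have := P.left_inv hx₀s
        rwa [show P x₀ = Φ₀ x₀ from congrFun hPc x₀] at this
      rw [Set.mem_preimage, hli]
      exact ⟨hx₀, hx₀s⟩
  set ψ : F → F := Φ ∘ P.symm with hψdef
  -- derivative of ψ on W
  have hψderiv : ∀ y ∈ W, HasFDerivAt ψ
      ((fderiv ℝ Φ (P.symm y)).comp (ContinuousLinearMap.inverse (fderiv ℝ Φ₀ (P.symm y)))) y := by
    intro y hy
    have hyT : y ∈ P.target := hy.1
    have hxΩ : P.symm y ∈ Ω' := hy.2.1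
    obtain ⟨Be, hBe⟩ := exists_equiv' _ (hbij _ hxΩ)
    have hBd : HasFDerivAt (⇑P) (Be : F →L[ℝ] F) (P.symm y) := by
      rw [hPc, hBe]; exact (hdΦ₀ _ hxΩ).hasFDerivAt
    have hsymmD : HasFDerivAt P.symm (Be.symm : F →L[ℝ] F) y := P.hasFDerivAt_symm hyT hBd
    have hinv : ContinuousLinearMap.inverse (fderiv ℝ Φ₀ (P.symm y)) = (Be.symm : F →L[ℝ] F) := by
      rw [← hBe, ContinuousLinearMap.inverse_equiv]
    rw [hinv]
    exact (hdΦ _ hxΩ).hasFDerivAt.comp y hsymmD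
  have hψc : ∀ y ∈ W, ContDiffAt ℝ 1 ψ y := by
    intro y hy
    have hyT : y ∈ P.target := hy.1
    have hxΩ : P.symm y ∈ Ω' := hy.2.1
    obtain ⟨Be, hBe⟩ := exists_equiv' _ (hbij _ hxΩ)
    have hBd : HasFDerivAt (⇑P) (Be : F →L[ℝ] F) (P.symm y) := by
      rw [hPc, hBe]; exact (hdΦ₀ _ hxΩ).hasFDerivAt
    have hsymmC : ContDiffAt ℝ 1 P.symm y :=
      P.contDiffAt_symm hyT hBd (by rw [hPc]; exact hΦ₀ _ hxΩ)
    exact (hΦ _ hxΩ).comp y hsymmC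
  have hψiso : ∀ y ∈ W, ∀ v : F, ‖fderiv ℝ ψ y v‖ = ‖v‖ := by
    intro y hy v
    have hxΩ : P.symm y ∈ Ω' := hy.2.1
    obtain ⟨Be, hBe⟩ := exists_equiv' _ (hbij _ hxΩ)
    have hinv : ContinuousLinearMap.inverse (fderiv ℝ Φ₀ (P.symm y)) = (Be.symm : F →L[ℝ] F) := by
      rw [← hBe, ContinuousLinearMap.inverse_equiv]
    have hfd : fderiv ℝ ψ y =
        (fderiv ℝ Φ (P.symm y)).comp (ContinuousLinearMap.inverse (fderiv ℝ Φ₀ (P.symm y))) :=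
      (hψderiv y hy).fderiv
    rw [hfd, hinv]
    have h1 : ‖fderiv ℝ Φ (P.symm y) (Be.symm v)‖ = ‖fderiv ℝ Φ₀ (P.symm y) (Be.symm v)‖ :=
      hAB _ hxΩ _
    have h2 : fderiv ℝ Φ₀ (P.symm y) (Be.symm v) = v := by
      rw [← hBe]; exact Be.apply_symm_apply v
    simp only [ContinuousLinearMap.coe_comp', Function.comp_apply, ContinuousLinearEquiv.coe_coe]
    rw [h1, h2]
  have hkey := key_local hWo hψc hψiso (Φ₀ x₀) hy₀W
  refine ⟨fderiv ℝ ψ (Φ₀ x₀), ?_⟩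
  have hcont : ContinuousAt Φ₀ x₀ := (hdΦ₀ x₀ hx₀).continuousAt
  have hev2 : ∀ᶠ x in nhds x₀, fderiv ℝ ψ (Φ₀ x) = fderiv ℝ ψ (Φ₀ x₀) := hcont.eventually hkey
  have hmemev : ∀ᶠ x in nhds x₀, x ∈ Ω' ∩ P.source :=
    (hΩo.inter P.open_source).mem_nhds ⟨hx₀, hx₀s⟩
  filter_upwards [hev2, hmemev] with x hfx hxmem
  obtain ⟨hxΩ, hxs⟩ := hxmem
  have hPx : P x = Φ₀ x := congrFun hPc x
  have hli : P.symm (Φ₀ x) = x := by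
    have := P.left_inv hxs
    rwa [hPx] at this
  have hyW : Φ₀ x ∈ W := by
    constructor
    · rw [← hPx]; exact P.map_source hxs
    · rw [Set.mem_preimage, hli]; exact ⟨hxΩ, hxs⟩
  obtain ⟨Be, hBe⟩ := exists_equiv' _ (hbij _ hxΩ)
  have hinv : ContinuousLinearMap.inverse (fderiv ℝ Φ₀ x) = (Be.symm : F →L[ℝ] F) := by
    rw [← hBe, ContinuousLinearMap.inverse_equiv]
  have hfd : fderiv ℝ ψ (Φ₀ x) =
      (fderiv ℝ Φ x).comp (ContinuousLinearMap.inverse (fderiv ℝ Φ₀ x)) := by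
    have := (hψderiv (Φ₀ x) hyW).fderiv
    rwa [hli] at this
  rw [hfd, hinv] at hfx
  -- now recover fderiv Φ x = C ∘ fderiv Φ₀ x
  ext v
  have := congrArg (fun (L : F →L[ℝ] F) => L (Be v)) hfx
  simp only [ContinuousLinearMap.coe_comp', Function.comp_apply,
    ContinuousLinearEquiv.coe_coe, Be.symm_apply_apply] at this ⊢
  rw [this, ← hBe]
  rfl

end EWorld

theorem stmt11 {n : ℕ} (Ω : Set (Fin n → ℝ)) (hΩo : IsOpen Ω) (hΩc : IsConnected Ω)
    (φ φ₀ : (Fin n → ℝ) → (Fin n → ℝ))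
    (hφ : ContDiffOn ℝ 1 φ Ω) (hφ₀ : ContDiffOn ℝ 1 φ₀ Ω)
    (hinv : ∀ x ∈ Ω, IsUnit (jac φ₀ x))
    (hmetric : ∀ x ∈ Ω, jac φ x * (jac φ x).transpose = jac φ₀ x * (jac φ₀ x).transpose) :
    ∃ (c : Fin n → ℝ) (Q : Matrix (Fin n) (Fin n) ℝ),
      Q ∈ Matrix.orthogonalGroup (Fin n) ℝ ∧
      (∀ x ∈ Ω, φ x = c + Q.mulVec (φ₀ x)) ∧
      ((∀ x ∈ Ω, 0 < (jac φ x).det * (jac φ₀ x).det) → Q.det = 1) := by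
  classical
  obtain ⟨x₀, hx₀Ω⟩ := hΩc.nonempty
  have hφc : ∀ x ∈ Ω, ContDiffAt ℝ 1 φ x := fun x hx => hφ.contDiffAt (hΩo.mem_nhds hx)
  have hφ₀c : ∀ x ∈ Ω, ContDiffAt ℝ 1 φ₀ x := fun x hx => hφ₀.contDiffAt (hΩo.mem_nhds hx)
  have hdφ : ∀ x ∈ Ω, DifferentiableAt ℝ φ x := fun x hx =>
    (hφc x hx).differentiableAt one_ne_zero
  have hdφ₀ : ∀ x ∈ Ω, DifferentiableAt ℝ φ₀ x := fun x hx =>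
    (hφ₀c x hx).differentiableAt one_ne_zero
  set MA : (Fin n → ℝ) → Matrix (Fin n) (Fin n) ℝ := fun x => (jac φ x)ᵀ with hMAdef
  set MB : (Fin n → ℝ) → Matrix (Fin n) (Fin n) ℝ := fun x => (jac φ₀ x)ᵀ with hMBdef
  have hMBunit : ∀ x ∈ Ω, IsUnit (MB x).det := fun x hx => by
    rw [hMBdef]; beta_reduce; rw [Matrix.det_transpose]
    exact ((Matrix.isUnit_iff_isUnit_det _).mp (hinv x hx))
  have hMM : ∀ x ∈ Ω, (MA x)ᵀ * MA x = (MB x)ᵀ * MB x := fun x hx => by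
    rw [hMAdef, hMBdef]; beta_reduce
    rw [Matrix.transpose_transpose, Matrix.transpose_transpose]
    exact hmetric x hx
  have hdot : ∀ x ∈ Ω, ∀ u : Fin n → ℝ,
      dotProduct ((MA x).mulVec u) ((MA x).mulVec u) =
      dotProduct ((MB x).mulVec u) ((MB x).mulVec u) := by
    intro x hx u
    rw [dot_mulVec_eq, dot_mulVec_eq, hMM x hx]
  -- Euclidean world
  set eL : EuclideanSpace ℝ (Fin n) ≃L[ℝ] (Fin n → ℝ) := EuclideanSpace.equiv (Fin n) ℝ with heL
  set Φ : EuclideanSpace ℝ (Fin n) → EuclideanSpace ℝ (Fin n) :=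
    fun z => eL.symm (φ (eL z)) with hΦdef
  set Φ₀ : EuclideanSpace ℝ (Fin n) → EuclideanSpace ℝ (Fin n) :=
    fun z => eL.symm (φ₀ (eL z)) with hΦ₀def
  set Ω' : Set (EuclideanSpace ℝ (Fin n)) := ⇑eL ⁻¹' Ω with hΩ'def
  have hΩ'o : IsOpen Ω' := hΩo.preimage eL.continuous
  have hnormE : ∀ u : Fin n → ℝ, ‖eL.symm u‖ = Real.sqrt (dotProduct u u) := by
    intro u
    rw [EuclideanSpace.norm_eq]
    congr 1
    apply Finset.sum_congr rfl
    intro i _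
    have h1 : (eL.symm u) i = u i := rfl
    rw [h1, Real.norm_eq_abs, sq_abs, sq]
  have hΦd : ∀ z ∈ Ω', HasFDerivAt Φ
      (((eL.symm : (Fin n → ℝ) →L[ℝ] EuclideanSpace ℝ (Fin n)).comp
        (fderiv ℝ φ (eL z))).comp (eL : EuclideanSpace ℝ (Fin n) →L[ℝ] (Fin n → ℝ))) z := by
    intro z hz
    exact (eL.symm.hasFDerivAt).comp z (((hdφ (eL z) hz).hasFDerivAt).comp z eL.hasFDerivAt)
  have hΦ₀d : ∀ z ∈ Ω', HasFDerivAt Φ₀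
      (((eL.symm : (Fin n → ℝ) →L[ℝ] EuclideanSpace ℝ (Fin n)).comp
        (fderiv ℝ φ₀ (eL z))).comp (eL : EuclideanSpace ℝ (Fin n) →L[ℝ] (Fin n → ℝ))) z := by
    intro z hz
    exact (eL.symm.hasFDerivAt).comp z (((hdφ₀ (eL z) hz).hasFDerivAt).comp z eL.hasFDerivAt)
  have hΦfd : ∀ z ∈ Ω', ∀ v, fderiv ℝ Φ z v = eL.symm ((MA (eL z)).mulVec (eL v)) := by
    intro z hz v
    rw [(hΦd z hz).fderiv]
    simp only [ContinuousLinearMap.coe_comp', Function.comp_apply,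
      ContinuousLinearEquiv.coe_coe]
    rw [fderiv_eq_mulVec (hdφ (eL z) hz)]
  have hΦ₀fd : ∀ z ∈ Ω', ∀ v, fderiv ℝ Φ₀ z v = eL.symm ((MB (eL z)).mulVec (eL v)) := by
    intro z hz v
    rw [(hΦ₀d z hz).fderiv]
    simp only [ContinuousLinearMap.coe_comp', Function.comp_apply,
      ContinuousLinearEquiv.coe_coe]
    rw [fderiv_eq_mulVec (hdφ₀ (eL z) hz)]
  have hΦc : ∀ z ∈ Ω', ContDiffAt ℝ 1 Φ z := by
    intro z hz
    exact (eL.symm.contDiff.contDiffAt).comp z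
      ((hφc (eL z) hz).comp z (eL.contDiff.contDiffAt))
  have hΦ₀c : ∀ z ∈ Ω', ContDiffAt ℝ 1 Φ₀ z := by
    intro z hz
    exact (eL.symm.contDiff.contDiffAt).comp z
      ((hφ₀c (eL z) hz).comp z (eL.contDiff.contDiffAt))
  have hMBbij : ∀ x ∈ Ω, Function.Bijective (fun u : Fin n → ℝ => (MB x).mulVec u) := by
    intro x hx
    constructor
    · intro a b hab
      have := congrArg (fun u => ((MB x)⁻¹).mulVec u) hab
      simpa [Matrix.mulVec_mulVec, Matrix.nonsing_inv_mul _ (hMBunit x hx),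
        Matrix.one_mulVec] using this
    · intro w
      refine ⟨((MB x)⁻¹).mulVec w, ?_⟩
      simp [Matrix.mulVec_mulVec, Matrix.mul_nonsing_inv _ (hMBunit x hx), Matrix.one_mulVec]
  have hΦ₀bij : ∀ z ∈ Ω', Function.Bijective (fderiv ℝ Φ₀ z) := by
    intro z hz
    have hfun : ⇑(fderiv ℝ Φ₀ z) =
        (⇑(eL.symm) ∘ (fun u => (MB (eL z)).mulVec u) ∘ ⇑eL) := funext (hΦ₀fd z hz)
    rw [hfun]
    exact (eL.symm.bijective.comp (hMBbij _ hz)).comp eL.bijective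
  have hABE : ∀ z ∈ Ω', ∀ v, ‖fderiv ℝ Φ z v‖ = ‖fderiv ℝ Φ₀ z v‖ := by
    intro z hz v
    rw [hΦfd z hz v, hΦ₀fd z hz v, hnormE, hnormE, hdot (eL z) hz (eL v)]
  -- Local constancy of Qm := MA * MB⁻¹
  set Qm : (Fin n → ℝ) → Matrix (Fin n) (Fin n) ℝ := fun x => MA x * (MB x)⁻¹ with hQmdef
  have hQmloc : ∀ x ∈ Ω, ∀ᶠ y in nhds x, Qm y = Qm x := by
    intro x hx
    have hzΩ' : eL.symm x ∈ Ω' := by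
      rw [hΩ'def, Set.mem_preimage, eL.apply_symm_apply]; exact hx
    obtain ⟨C, hC⟩ := pair_loc hΩ'o hΦc hΦ₀c hΦ₀bij hABE (eL.symm x) hzΩ'
    set Cpi : (Fin n → ℝ) →L[ℝ] (Fin n → ℝ) :=
      ((eL : EuclideanSpace ℝ (Fin n) →L[ℝ] (Fin n → ℝ)).comp C).comp
        (eL.symm : (Fin n → ℝ) →L[ℝ] EuclideanSpace ℝ (Fin n)) with hCpidef
    have hMCeq : ∀ y ∈ Ω, fderiv ℝ Φ (eL.symm y) = C.comp (fderiv ℝ Φ₀ (eL.symm y)) →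
        Qm y = LinearMap.toMatrix' (↑Cpi : (Fin n → ℝ) →ₗ[ℝ] (Fin n → ℝ)) := by
      intro y hy hCy
      have hyΩ' : eL.symm y ∈ Ω' := by
        rw [hΩ'def, Set.mem_preimage, eL.apply_symm_apply]; exact hy
      have happ : ∀ w : Fin n → ℝ, fderiv ℝ φ y w = Cpi (fderiv ℝ φ₀ y w) := by
        intro w
        have h1 := congrArg (fun (L : EuclideanSpace ℝ (Fin n) →L[ℝ] EuclideanSpace ℝ (Fin n))
            => eL (L (eL.symm w))) hCy
        simp only [ContinuousLinearMap.coe_comp', Function.comp_apply] at h1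
        rw [hΦfd _ hyΩ' (eL.symm w), hΦ₀fd _ hyΩ' (eL.symm w)] at h1
        rw [eL.apply_symm_apply, eL.apply_symm_apply, eL.apply_symm_apply] at h1
        rw [fderiv_eq_mulVec (hdφ y hy), fderiv_eq_mulVec (hdφ₀ y hy)]
        rw [hCpidef]
        simp only [ContinuousLinearMap.coe_comp', Function.comp_apply,
          ContinuousLinearEquiv.coe_coe]
        exact h1
      have hclm : fderiv ℝ φ y = Cpi.comp (fderiv ℝ φ₀ y) := by
        refine ContinuousLinearMap.ext fun w => ?_
        simp only [ContinuousLinearMap.coe_comp', Function.comp_apply]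
        exact happ w
      have hlin : (↑(fderiv ℝ φ y) : (Fin n → ℝ) →ₗ[ℝ] (Fin n → ℝ)) =
          (↑Cpi : (Fin n → ℝ) →ₗ[ℝ] (Fin n → ℝ)).comp
            (↑(fderiv ℝ φ₀ y) : (Fin n → ℝ) →ₗ[ℝ] (Fin n → ℝ)) := by
        rw [hclm]; rfl
      have hmat := congrArg LinearMap.toMatrix' hlin
      rw [LinearMap.toMatrix'_comp, toMatrix'_fderiv (hdφ y hy),
        toMatrix'_fderiv (hdφ₀ y hy)] at hmat
      rw [hQmdef]; beta_reduce
      rw [hMAdef, hMBdef]; beta_reduce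
      rw [hmat, Matrix.mul_nonsing_inv_cancel_right _ _ (hMBunit y hy)]
    have htd : Filter.Tendsto (⇑eL.symm) (nhds x) (nhds (eL.symm x)) :=
      eL.symm.continuous.tendsto x
    have hev := htd.eventually hC
    filter_upwards [hev, hΩo.mem_nhds hx] with y hy hyΩ
    rw [hMCeq y hyΩ hy, hMCeq x hx hC.self_of_nhds]
  have hQmconst := eq_on_of_locally_const hΩc.isPreconnected hQmloc hx₀Ω
  set Q : Matrix (Fin n) (Fin n) ℝ := Qm x₀ with hQdef
  have hrel : ∀ x ∈ Ω, MA x = Q * MB x := by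
    intro x hx
    have h1 : Qm x * MB x = MA x := by
      rw [hQmdef]; beta_reduce
      exact Matrix.nonsing_inv_mul_cancel_right _ _ (hMBunit x hx)
    rw [← h1, hQmconst x hx]
  -- orthogonality
  have hQtQ : Qᵀ * Q = 1 := by
    have h1 : MB x₀ * (MB x₀)⁻¹ = 1 := Matrix.mul_nonsing_inv _ (hMBunit x₀ hx₀Ω)
    have hQe : Q = MA x₀ * (MB x₀)⁻¹ := rfl
    rw [hQe, Matrix.transpose_mul]
    calc ((MB x₀)⁻¹)ᵀ * (MA x₀)ᵀ * (MA x₀ * (MB x₀)⁻¹)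
        = ((MB x₀)⁻¹)ᵀ * ((MA x₀)ᵀ * MA x₀) * (MB x₀)⁻¹ := by
          rw [Matrix.mul_assoc, Matrix.mul_assoc, Matrix.mul_assoc]
      _ = ((MB x₀)⁻¹)ᵀ * ((MB x₀)ᵀ * MB x₀) * (MB x₀)⁻¹ := by rw [hMM x₀ hx₀Ω]
      _ = ((MB x₀)⁻¹)ᵀ * (MB x₀)ᵀ * (MB x₀ * (MB x₀)⁻¹) := by
          rw [Matrix.mul_assoc, Matrix.mul_assoc, Matrix.mul_assoc]
      _ = (MB x₀ * (MB x₀)⁻¹)ᵀ * (MB x₀ * (MB x₀)⁻¹) := by rw [Matrix.transpose_mul]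
      _ = 1 := by rw [h1, Matrix.transpose_one, one_mul]
  have hstar : star Q = Qᵀ := by
    rw [Matrix.star_eq_conjTranspose]
    ext i j
    rw [Matrix.conjTranspose_apply, Matrix.transpose_apply, star_trivial]
  have horth : Q ∈ Matrix.orthogonalGroup (Fin n) ℝ := by
    rw [Matrix.mem_orthogonalGroup_iff']
    exact hQtQ
  -- the affine relation
  have hQD : ∀ x ∈ Ω, HasFDerivAt (fun y => Q.mulVec (φ₀ y))
      ((LinearMap.toContinuousLinearMap (Matrix.mulVecLin Q)).comp (fderiv ℝ φ₀ x)) x := by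
    intro x hx
    exact (LinearMap.toContinuousLinearMap (Matrix.mulVecLin Q)).hasFDerivAt.comp x
      (hdφ₀ x hx).hasFDerivAt
  set h : (Fin n → ℝ) → (Fin n → ℝ) := fun x => φ x - Q.mulVec (φ₀ x) with hhdef
  have hhd : ∀ x ∈ Ω, HasFDerivAt h (0 : (Fin n → ℝ) →L[ℝ] (Fin n → ℝ)) x := by
    intro x hx
    have h2 : HasFDerivAt h
        (fderiv ℝ φ x - (LinearMap.toContinuousLinearMap (Matrix.mulVecLin Q)).comp
          (fderiv ℝ φ₀ x)) x :=
      (hdφ x hx).hasFDerivAt.sub (hQD x hx)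
    have h3 : fderiv ℝ φ x - (LinearMap.toContinuousLinearMap (Matrix.mulVecLin Q)).comp
        (fderiv ℝ φ₀ x) = 0 := by
      refine ContinuousLinearMap.ext fun w => ?_
      simp only [ContinuousLinearMap.coe_sub', Pi.sub_apply,
        ContinuousLinearMap.coe_comp', Function.comp_apply, ContinuousLinearMap.zero_apply]
      have hQw : (LinearMap.toContinuousLinearMap (Matrix.mulVecLin Q)) (fderiv ℝ φ₀ x w)
          = Q.mulVec (fderiv ℝ φ₀ x w) := rfl
      rw [hQw, fderiv_eq_mulVec (hdφ x hx), fderiv_eq_mulVec (hdφ₀ x hx),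
        Matrix.mulVec_mulVec, ← hrel x hx]
      exact sub_self _
    rwa [h3] at h2
  have hhloc : ∀ x ∈ Ω, ∀ᶠ y in nhds x, h y = h x := by
    intro x hx
    obtain ⟨ε, hεpos, hε⟩ := Metric.isOpen_iff.mp hΩo x hx
    have hball : Metric.ball x ε ∈ nhds x := Metric.ball_mem_nhds _ hεpos
    filter_upwards [hball] with y hy
    have := (convex_ball x ε).norm_image_sub_le_of_norm_hasFDerivWithin_le
      (f := h) (f' := fun _ => (0 : (Fin n → ℝ) →L[ℝ] (Fin n → ℝ))) (C := 0)
      (fun z hz => (hhd z (hε hz)).hasFDerivWithinAt)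
      (fun z _ => by simp) (Metric.mem_ball_self hεpos) hy
    have hle : ‖h y - h x‖ ≤ 0 := by simpa using this
    have := norm_le_zero_iff.mp hle
    exact sub_eq_zero.mp this
  have hhconst := eq_on_of_locally_const hΩc.isPreconnected hhloc hx₀Ω
  refine ⟨φ x₀ - Q.mulVec (φ₀ x₀), Q, horth, ?_, ?_⟩
  · intro x hx
    have := hhconst x hx
    rw [hhdef] at this
    simp only at this
    have : φ x - Q.mulVec (φ₀ x) = φ x₀ - Q.mulVec (φ₀ x₀) := this
    funext i
    have := congrFun this i
    simp only [Pi.sub_apply, Pi.add_apply] at this ⊢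
    linarith
  · intro hsign
    have hd := hsign x₀ hx₀Ω
    have hdetrel : (jac φ x₀).det = Q.det * (jac φ₀ x₀).det := by
      have h1 := congrArg Matrix.det (hrel x₀ hx₀Ω)
      rw [hMAdef, hMBdef] at h1
      simp only [Matrix.det_transpose, Matrix.det_mul] at h1
      exact h1
    have hd₀ : (jac φ₀ x₀).det ≠ 0 := by
      have := (Matrix.isUnit_iff_isUnit_det _).mp (hinv x₀ hx₀Ω)
      exact this.ne_zero
    have hQdet2 : Q.det * Q.det = 1 := by
      have := congrArg Matrix.det hQtQ
      rwa [Matrix.det_mul, Matrix.det_transpose, Matrix.det_one] at this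
    have hQpos : 0 < Q.det := by
      rw [hdetrel] at hd
      rcases mul_self_eq_one_iff.mp hQdet2 with h | h
      · rw [h]; norm_num
      · exfalso
        rw [h] at hd
        nlinarith [sq_nonneg ((jac φ₀ x₀).det)]
    rcases mul_self_eq_one_iff.mp hQdet2 with h | h
    · exact h
    · exfalso; rw [h] at hQpos; linarith
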